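/- Let Ω ⊆ ℝ³ be open, and let ρ : Ω → ℝ with ρ > 0, u = (u₁,u₂,u₃) : Ω → ℝ³ with u₁ > 0, and φ : Ω → ℝ be C¹ functions satisfying the steady Euler–Poisson continuity equation ∂₁(ρu₁)+∂₂(ρu₂)+∂₃(ρu₃) = 0 and momentum equations ∂₁(ρu_iu₁)+∂₂(ρu_iu₂)+∂₃(ρu_iu₃)+∂_i(p(ρ)) = ρ∂_iφ for i = 1,2,3. Set β₂ = u₂/u₁, β₃ = u₃/u₁, G = 1 + β₂² + β₃², D = ∂₁ + β₂∂₂ + β₃∂₃, and B = ½(u₁²+u₂²+u₃²) + h(ρ) − φ. Then G satisfies the Riccati-type equation DG = (1/(B+φ−h(ρ)))·(G²·∂₁(h(ρ)−φ) − G·D(h(ρ)−φ)) on Ω (note B + φ − h(ρ) = ½|u|² > 0). -/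

import Mathlib

open Real Set MeasureTheory

/-- The `i`-th partial derivative of a function on `ℝ³`. -/
noncomputable def pd (i : Fin 3) (f : (Fin 3 → ℝ) → ℝ) (x : Fin 3 → ℝ) : ℝ :=
  fderiv ℝ f x (Pi.single i 1)

/-- The slope `β₂ = u₂/u₁`. -/
noncomputable def beta2 (u1 u2 : (Fin 3 → ℝ) → ℝ) : (Fin 3 → ℝ) → ℝ :=
  fun x => u2 x / u1 x

/-- The slope `β₃ = u₃/u₁`. -/
noncomputable def beta3 (u1 u3 : (Fin 3 → ℝ) → ℝ) : (Fin 3 → ℝ) → ℝ :=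
  fun x => u3 x / u1 x

/-- `G = 1 + β₂² + β₃²`. -/
noncomputable def Gfun (u1 u2 u3 : (Fin 3 → ℝ) → ℝ) : (Fin 3 → ℝ) → ℝ :=
  fun x => 1 + (beta2 u1 u2 x) ^ 2 + (beta3 u1 u3 x) ^ 2

/-- The transport operator `D = ∂₁ + β₂∂₂ + β₃∂₃`. -/
noncomputable def Dop (u1 u2 u3 : (Fin 3 → ℝ) → ℝ) (f : (Fin 3 → ℝ) → ℝ)
    (x : Fin 3 → ℝ) : ℝ :=
  pd 0 f x + beta2 u1 u2 x * pd 1 f x + beta3 u1 u3 x * pd 2 f x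

/-- The Bernoulli function `B = ½(u₁²+u₂²+u₃²) + h(ρ) − φ`. -/
noncomputable def Bfun (ρ u1 u2 u3 φ : (Fin 3 → ℝ) → ℝ) (h : ℝ → ℝ) :
    (Fin 3 → ℝ) → ℝ :=
  fun x => (1 / 2) * ((u1 x) ^ 2 + (u2 x) ^ 2 + (u3 x) ^ 2) + h (ρ x) - φ x

lemma pd_mul (f g : (Fin 3 → ℝ) → ℝ) (x : Fin 3 → ℝ)
    (hf : DifferentiableAt ℝ f x) (hg : DifferentiableAt ℝ g x) (i : Fin 3) :
    pd i (fun y => f y * g y) x = f x * pd i g x + g x * pd i f x := by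
  unfold pd
  rw [fderiv_fun_mul hf hg]
  simp

lemma pd_add (f g : (Fin 3 → ℝ) → ℝ) (x : Fin 3 → ℝ)
    (hf : DifferentiableAt ℝ f x) (hg : DifferentiableAt ℝ g x) (i : Fin 3) :
    pd i (fun y => f y + g y) x = pd i f x + pd i g x := by
  unfold pd
  rw [fderiv_fun_add hf hg]
  simp

lemma pd_sub (f g : (Fin 3 → ℝ) → ℝ) (x : Fin 3 → ℝ)
    (hf : DifferentiableAt ℝ f x) (hg : DifferentiableAt ℝ g x) (i : Fin 3) :
    pd i (fun y => f y - g y) x = pd i f x - pd i g x := by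
  unfold pd
  rw [fderiv_fun_sub hf hg]
  simp

lemma pd_const (c : ℝ) (x : Fin 3 → ℝ) (i : Fin 3) :
    pd i (fun _ => c) x = 0 := by
  unfold pd
  rw [fderiv_fun_const]
  simp

lemma pd_comp (g : ℝ → ℝ) (g' : ℝ) (f : (Fin 3 → ℝ) → ℝ) (x : Fin 3 → ℝ)
    (hg : HasDerivAt g g' (f x)) (hf : DifferentiableAt ℝ f x) (i : Fin 3) :
    pd i (fun y => g (f y)) x = g' * pd i f x := by
  have hc := (hg.comp_hasFDerivAt x hf.hasFDerivAt).fderiv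
  rw [Function.comp_def] at hc
  unfold pd
  rw [hc]
  simp

set_option maxHeartbeats 1000000 in
/-- `G = 1 + β₂² + β₃²` satisfies the Riccati-type equation
`DG = (1/(B+φ−h(ρ))) (G² ∂₁(h(ρ)−φ) − G D(h(ρ)−φ))`. -/
theorem riccati_equation_for_G
    (Ω : Set (Fin 3 → ℝ)) (hΩ : IsOpen Ω)
    (ρ u1 u2 u3 φ : (Fin 3 → ℝ) → ℝ)
    (p p' h : ℝ → ℝ)
    (hρpos : ∀ x ∈ Ω, 0 < ρ x)
    (hu1pos : ∀ x ∈ Ω, 0 < u1 x)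
    (hρ : ContDiffOn ℝ 1 ρ Ω) (hu1 : ContDiffOn ℝ 1 u1 Ω)
    (hu2 : ContDiffOn ℝ 1 u2 Ω) (hu3 : ContDiffOn ℝ 1 u3 Ω)
    (hφ : ContDiffOn ℝ 1 φ Ω)
    (hpC : ContDiffOn ℝ 1 p (Set.Ioi 0))
    (hp : ∀ r : ℝ, 0 < r → HasDerivAt p (p' r) r)
    (hh : ∀ r : ℝ, 0 < r → HasDerivAt h (p' r / r) r)
    (hcont : ∀ x ∈ Ω,
      pd 0 (fun y => ρ y * u1 y) x + pd 1 (fun y => ρ y * u2 y) x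
        + pd 2 (fun y => ρ y * u3 y) x = 0)
    (hmom1 : ∀ x ∈ Ω,
      pd 0 (fun y => ρ y * u1 y * u1 y) x + pd 1 (fun y => ρ y * u1 y * u2 y) x
        + pd 2 (fun y => ρ y * u1 y * u3 y) x + pd 0 (fun y => p (ρ y)) x
        = ρ x * pd 0 φ x)
    (hmom2 : ∀ x ∈ Ω,
      pd 0 (fun y => ρ y * u2 y * u1 y) x + pd 1 (fun y => ρ y * u2 y * u2 y) x
        + pd 2 (fun y => ρ y * u2 y * u3 y) x + pd 1 (fun y => p (ρ y)) x
        = ρ x * pd 1 φ x)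
    (hmom3 : ∀ x ∈ Ω,
      pd 0 (fun y => ρ y * u3 y * u1 y) x + pd 1 (fun y => ρ y * u3 y * u2 y) x
        + pd 2 (fun y => ρ y * u3 y * u3 y) x + pd 2 (fun y => p (ρ y)) x
        = ρ x * pd 2 φ x) :
    ∀ x ∈ Ω,
      Dop u1 u2 u3 (Gfun u1 u2 u3) x
        = (1 / (Bfun ρ u1 u2 u3 φ h x + φ x - h (ρ x))) *
          ( (Gfun u1 u2 u3 x) ^ 2 * pd 0 (fun y => h (ρ y) - φ y) x
            - Gfun u1 u2 u3 x * Dop u1 u2 u3 (fun y => h (ρ y) - φ y) x ) := by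
  intro x hx
  have hmem : Ω ∈ nhds x := hΩ.mem_nhds hx
  have dρ : DifferentiableAt ℝ ρ x := (hρ.differentiableOn one_ne_zero).differentiableAt hmem
  have d1 : DifferentiableAt ℝ u1 x := (hu1.differentiableOn one_ne_zero).differentiableAt hmem
  have d2 : DifferentiableAt ℝ u2 x := (hu2.differentiableOn one_ne_zero).differentiableAt hmem
  have d3 : DifferentiableAt ℝ u3 x := (hu3.differentiableOn one_ne_zero).differentiableAt hmem
  have dφ : DifferentiableAt ℝ φ x := (hφ.differentiableOn one_ne_zero).differentiableAt hmem
  have hr : 0 < ρ x := hρpos x hx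
  have hrne : ρ x ≠ 0 := hr.ne'
  have ha1 : 0 < u1 x := hu1pos x hx
  have ha1' : u1 x ≠ 0 := ha1.ne'
  -- derivative of h ∘ ρ - φ
  have dh : DifferentiableAt ℝ (fun y => h (ρ y)) x :=
    ((hh _ hr).differentiableAt).comp x dρ
  have hqd : ∀ i : Fin 3, pd i (fun y => h (ρ y) - φ y) x
      = (p' (ρ x) / ρ x) * pd i ρ x - pd i φ x := by
    intro i
    rw [pd_sub _ _ _ dh dφ, pd_comp h (p' (ρ x) / ρ x) ρ x (hh _ hr) dρ]
  have hpd : ∀ i : Fin 3, pd i (fun y => p (ρ y)) x = p' (ρ x) * pd i ρ x := by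
    intro i
    exact pd_comp p (p' (ρ x)) ρ x (hp _ hr) dρ i
  -- expansion of the conserved momentum terms
  have expand : ∀ (v w : (Fin 3 → ℝ) → ℝ), DifferentiableAt ℝ v x →
      DifferentiableAt ℝ w x → ∀ i : Fin 3,
      pd i (fun y => ρ y * v y * w y) x
        = (ρ x * w x) * pd i v x + v x * pd i (fun y => ρ y * w y) x := by
    intro v w hv hw i
    have heq : (fun y => ρ y * v y * w y) = (fun y => (ρ y * w y) * v y) := by
      funext y; ring
    rw [heq, pd_mul _ _ _ (dρ.fun_mul hw) hv i]
  have C := hcont x hx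
  -- the three scalar momentum relations
  have m1 : u1 x * pd 0 u1 x + u2 x * pd 1 u1 x + u3 x * pd 2 u1 x
      = - pd 0 (fun y => h (ρ y) - φ y) x := by
    have M := hmom1 x hx
    rw [expand u1 u1 d1 d1 0, expand u1 u2 d1 d2 1, expand u1 u3 d1 d3 2, hpd 0] at M
    have hc : ρ x * (u1 x * pd 0 u1 x + u2 x * pd 1 u1 x + u3 x * pd 2 u1 x)
        = ρ x * (- pd 0 (fun y => h (ρ y) - φ y) x) := by
      have hq : ρ x * pd 0 (fun y => h (ρ y) - φ y) x
          = p' (ρ x) * pd 0 ρ x - ρ x * pd 0 φ x := by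
        rw [hqd 0]; field_simp
      linear_combination M - u1 x * C + hq
    exact mul_left_cancel₀ hrne hc
  have m2 : u1 x * pd 0 u2 x + u2 x * pd 1 u2 x + u3 x * pd 2 u2 x
      = - pd 1 (fun y => h (ρ y) - φ y) x := by
    have M := hmom2 x hx
    rw [expand u2 u1 d2 d1 0, expand u2 u2 d2 d2 1, expand u2 u3 d2 d3 2, hpd 1] at M
    have hc : ρ x * (u1 x * pd 0 u2 x + u2 x * pd 1 u2 x + u3 x * pd 2 u2 x)
        = ρ x * (- pd 1 (fun y => h (ρ y) - φ y) x) := by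
      have hq : ρ x * pd 1 (fun y => h (ρ y) - φ y) x
          = p' (ρ x) * pd 1 ρ x - ρ x * pd 1 φ x := by
        rw [hqd 1]; field_simp
      linear_combination M - u2 x * C + hq
    exact mul_left_cancel₀ hrne hc
  have m3 : u1 x * pd 0 u3 x + u2 x * pd 1 u3 x + u3 x * pd 2 u3 x
      = - pd 2 (fun y => h (ρ y) - φ y) x := by
    have M := hmom3 x hx
    rw [expand u3 u1 d3 d1 0, expand u3 u2 d3 d2 1, expand u3 u3 d3 d3 2, hpd 2] at M
    have hc : ρ x * (u1 x * pd 0 u3 x + u2 x * pd 1 u3 x + u3 x * pd 2 u3 x)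
        = ρ x * (- pd 2 (fun y => h (ρ y) - φ y) x) := by
      have hq : ρ x * pd 2 (fun y => h (ρ y) - φ y) x
          = p' (ρ x) * pd 2 ρ x - ρ x * pd 2 φ x := by
        rw [hqd 2]; field_simp
      linear_combination M - u3 x * C + hq
    exact mul_left_cancel₀ hrne hc
  -- derivative of G
  have hGd : ∀ i : Fin 3, pd i (Gfun u1 u2 u3) x
      = 2 * (u2 x / u1 x) * ((pd i u2 x * u1 x - u2 x * pd i u1 x) / (u1 x) ^ 2)
        + 2 * (u3 x / u1 x) * ((pd i u3 x * u1 x - u3 x * pd i u1 x) / (u1 x) ^ 2) := by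
    intro i
    have hinv : pd i (fun y => (u1 y)⁻¹) x = -((u1 x) ^ 2)⁻¹ * pd i u1 x :=
      pd_comp _ _ _ _ (hasDerivAt_inv ha1') d1 i
    have dinv : DifferentiableAt ℝ (fun y => (u1 y)⁻¹) x := d1.inv ha1'
    have db2 : DifferentiableAt ℝ (fun y => u2 y * (u1 y)⁻¹) x := d2.mul dinv
    have db3 : DifferentiableAt ℝ (fun y => u3 y * (u1 y)⁻¹) x := d3.mul dinv
    have hG : Gfun u1 u2 u3 = fun y =>
        (1 : ℝ) + ((fun z => u2 z * (u1 z)⁻¹) y * (fun z => u2 z * (u1 z)⁻¹) y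
          + (fun z => u3 z * (u1 z)⁻¹) y * (fun z => u3 z * (u1 z)⁻¹) y) := by
      funext y
      simp only [Gfun, beta2, beta3, div_eq_mul_inv]
      ring
    rw [hG, pd_add _ _ _ (differentiableAt_const 1) ((db2.fun_mul db2).fun_add (db3.fun_mul db3)) i,
      pd_const, pd_add _ _ _ (db2.fun_mul db2) (db3.fun_mul db3) i,
      pd_mul _ _ _ db2 db2 i, pd_mul _ _ _ db3 db3 i,
      pd_mul _ _ _ d2 dinv i, pd_mul _ _ _ d3 dinv i, hinv]
    field_simp
    ring
  -- the denominator
  have hden : Bfun ρ u1 u2 u3 φ h x + φ x - h (ρ x)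
      = (1 / 2) * ((u1 x) ^ 2 + (u2 x) ^ 2 + (u3 x) ^ 2) := by
    simp only [Bfun]; ring
  have hSpos : (0 : ℝ) < (u1 x) ^ 2 + (u2 x) ^ 2 + (u3 x) ^ 2 := by positivity
  have hSne : (1 / 2 : ℝ) * ((u1 x) ^ 2 + (u2 x) ^ 2 + (u3 x) ^ 2) ≠ 0 := by positivity
  have hL : (u1 x) ^ 4 * Dop u1 u2 u3 (Gfun u1 u2 u3) x
      = 2 * (u1 x) * (u2 x) * (u1 x * pd 0 u2 x + u2 x * pd 1 u2 x + u3 x * pd 2 u2 x)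
        + 2 * (u1 x) * (u3 x) * (u1 x * pd 0 u3 x + u2 x * pd 1 u3 x + u3 x * pd 2 u3 x)
        - 2 * ((u2 x) ^ 2 + (u3 x) ^ 2)
            * (u1 x * pd 0 u1 x + u2 x * pd 1 u1 x + u3 x * pd 2 u1 x) := by
    simp only [Dop, beta2, beta3]
    rw [hGd 0, hGd 1, hGd 2]
    field_simp
    ring
  have hR : (u1 x) ^ 4 * ((1 / ((1 / 2) * ((u1 x) ^ 2 + (u2 x) ^ 2 + (u3 x) ^ 2))) *
        ( (Gfun u1 u2 u3 x) ^ 2 * pd 0 (fun y => h (ρ y) - φ y) x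
          - Gfun u1 u2 u3 x * Dop u1 u2 u3 (fun y => h (ρ y) - φ y) x ))
      = 2 * (u1 x) * (u2 x) * (- pd 1 (fun y => h (ρ y) - φ y) x)
        + 2 * (u1 x) * (u3 x) * (- pd 2 (fun y => h (ρ y) - φ y) x)
        - 2 * ((u2 x) ^ 2 + (u3 x) ^ 2) * (- pd 0 (fun y => h (ρ y) - φ y) x) := by
    simp only [Dop, Gfun, beta2, beta3]
    field_simp
    ring
  rw [hden]
  refine mul_left_cancel₀ (pow_ne_zero 4 ha1') ?_
  rw [hL, m1, m2, m3, hR]
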